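/- If M is FTA-compliant with a non-conflating interpreted architecture ((D,↝), (A, dom, 𝕀)), then for all domains u ∈ D and all α, α' ∈ A* such that tf_u(α) = tf_u(α'), we have view_u(α) = view_u(α'). -/
import Mathlib


structure Machine (S A D O : Type) where
  s0 : S
  step : S → A → S
  dom : A → D
  obs : D → S → O

namespace Machine

def run {S A D O : Type} (M : Machine S A D O) (α : List A) : S :=
  α.foldl M.step M.s0

end Machine
/-- Elements of a view: actions or (group) observations. -/
inductive VE (A O' : Type) where
  | act : A → VE A O'
  | obs : O' → VE A O'

open Classical in
/-- Absorptive concatenation: `σ ∘ x` is `σ` if `x` equals the last element of `σ`,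
and `σ ++ [x]` otherwise. -/
noncomputable def absorb {X : Type} (σ : List X) (x : X) : List X :=
  if σ.getLast? = some x then σ else σ ++ [x]

open Classical in
/-- View of a group `G`, computed on the reversed action sequence. -/
noncomputable def viewR {S A D O : Type} (M : Machine S A D O) (G : Set D) :
    List A → List (VE A (G → O))
  | [] => [VE.obs (fun u : G => M.obs u.1 M.s0)]
  | a :: ρ =>
    let o : VE A (G → O) := VE.obs (fun u : G => M.obs u.1 (M.run ((a :: ρ).reverse)))
    if M.dom a ∈ G then viewR M G ρ ++ [VE.act a, o] else absorb (viewR M G ρ) o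

/-- The view of group `G` of the action sequence `α`. -/
noncomputable def view {S A D O : Type} (M : Machine S A D O) (G : Set D) (α : List A) :
    List (VE A (G → O)) :=
  viewR M G α.reverse
/-- An extended architecture: `edge u v = none` means no edge, `edge u v = some none`
means an edge labelled `⊤`, and `edge u v = some (some f)` means an edge labelled by
the filter-function name `f`.  There is at most one label per ordered pair by
construction, and the relation is reflexive with label `⊤`. -/
structure ExtArch (D L : Type) where
  edge : D → D → Option (Option L)
  refl : ∀ u, edge u u = some none

/-- Values of the `tf` function and of filter-function interpretations:
`eps` is the empty value ε, `base v` an arbitrary basic value, and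
`pair σ a` the pair `(σ, a)` of a `tf` value and an action. -/
inductive TFVal (A V : Type) where
  | eps : TFVal A V
  | base : V → TFVal A V
  | pair : List (TFVal A V) → A → TFVal A V

/-- `σ ⌢ x`: appends `x` as a single new last element unless `x = ε`. -/
def snoc' {A V : Type} (σ : List (TFVal A V)) : TFVal A V → List (TFVal A V)
  | .eps => σ
  | x => σ ++ [x]

/-- `tf`, computed on the reversed action sequence. -/
def tfR {A D L V : Type} (Arch : ExtArch D L) (dm : A → D)
    (I : L → List A → A → TFVal A V) : List A → D → List (TFVal A V)
  | [], _ => []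
  | a :: ρ, u =>
    match Arch.edge (dm a) u with
    | none => tfR Arch dm I ρ u
    | some none => tfR Arch dm I ρ u ++ [TFVal.pair (tfR Arch dm I ρ (dm a)) a]
    | some (some f) => snoc' (tfR Arch dm I ρ u) (I f ρ.reverse a)

/-- `tf Arch dm I α u` : maximal information domain `u` is permitted to have after `α`. -/
def tf {A D L V : Type} (Arch : ExtArch D L) (dm : A → D)
    (I : L → List A → A → TFVal A V) (α : List A) (u : D) : List (TFVal A V) :=
  tfR Arch dm I α.reverse u

/-- `inF Arch dm I α a u` : the information `in_{dom(a),u}(α, a)` transmitted to `u`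
when action `a` is performed after `α`. -/
def inF {A D L V : Type} (Arch : ExtArch D L) (dm : A → D)
    (I : L → List A → A → TFVal A V) (α : List A) (a : A) (u : D) : TFVal A V :=
  match Arch.edge (dm a) u with
  | none => TFVal.eps
  | some none => TFVal.pair (tf Arch dm I α (dm a)) a
  | some (some f) => I f α a
/-- FTA-compliance of a machine with an interpreted extended architecture
(whose actions, domains and domain function are those of the machine). -/
def FTACompliant {S A D O L V : Type} (M : Machine S A D O) (Arch : ExtArch D L)
    (I : L → List A → A → TFVal A V) : Prop :=
  ∀ (u : D) (α α' : List A), tf Arch M.dom I α u = tf Arch M.dom I α' u →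
    M.obs u (M.run α) = M.obs u (M.run α')
/-- A non-conflating interpreted architecture. -/
def NonConflating {A D L V : Type} (Arch : ExtArch D L) (dm : A → D)
    (I : L → List A → A → TFVal A V) : Prop :=
  ∀ (u v : D) (f : L), Arch.edge u v = some (some f) →
    ∀ (a b : A), dm a = u → dm b = v →
      ∀ (α β : List A), I f α a ≠ TFVal.pair (tf Arch dm I β v) b

section Aux

variable {S A D O L V : Type} (M : Machine S A D O) (Arch : ExtArch D L)
  (I : L → List A → A → TFVal A V) (u : D)

open Classical in
/-- Reconstruct the observation of `u` from a `tf` value, using choice. -/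
noncomputable def Obs (t : List (TFVal A V)) : O :=
  M.obs u (M.run (if h : ∃ α, tf Arch M.dom I α u = t then h.choose else []))

open Classical in
/-- Reconstruct the view of `{u}` from the reversed `tf` value. -/
noncomputable def reconR : List (TFVal A V) → List (VE A (({u} : Set D) → O))
  | [] => [VE.obs (fun _ => Obs M Arch I u [])]
  | x :: r =>
    let o : VE A (({u} : Set D) → O) := VE.obs (fun _ => Obs M Arch I u (x :: r).reverse)
    match x with
    | .pair σ b =>
        if M.dom b = u ∧ σ = r.reverse then reconR r ++ [VE.act b, o]
        else absorb (reconR r) o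
    | .eps => absorb (reconR r) o
    | .base _ => absorb (reconR r) o

lemma absorb_getLast? {X : Type} (σ : List X) (x : X) :
    (absorb σ x).getLast? = some x := by
  unfold absorb
  split
  · assumption
  · simp

lemma absorb_of_getLast? {X : Type} {σ : List X} {x : X} (h : σ.getLast? = some x) :
    absorb σ x = σ := by
  unfold absorb; rw [if_pos h]

lemma reconR_getLast? (r : List (TFVal A V)) :
    (reconR M Arch I u r).getLast? = some (VE.obs (fun _ => Obs M Arch I u r.reverse)) := by
  cases r with
  | nil => simp [reconR]
  | cons x r =>
    cases x with
    | eps => simp [reconR, absorb_getLast?]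
    | base v => simp [reconR, absorb_getLast?]
    | pair σ b =>
      by_cases h : M.dom b = u ∧ σ = r.reverse
      · simp [reconR, h]
      · simp [reconR, h, absorb_getLast?]

lemma Obs_tf (hFTA : FTACompliant M Arch I) (ρ : List A) :
    Obs M Arch I u (tfR Arch M.dom I ρ u) = M.obs u (M.run ρ.reverse) := by
  have h : ∃ α, tf Arch M.dom I α u = tfR Arch M.dom I ρ u :=
    ⟨ρ.reverse, by simp [tf]⟩
  unfold Obs
  rw [dif_pos h]
  exact hFTA u h.choose ρ.reverse (by simpa [tf] using h.choose_spec)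

lemma obsfun (s : S) :
    (fun u' : ({u} : Set D) => M.obs u'.1 s) = (fun _ : ({u} : Set D) => M.obs u s) := by
  funext u'
  obtain ⟨v, hv⟩ := u'
  simp only [Set.mem_singleton_iff] at hv
  subst hv
  rfl


lemma viewR_cons_mem {G : Set D} {a : A} {ρ : List A} (h : M.dom a ∈ G) :
    viewR M G (a :: ρ) = viewR M G ρ
      ++ [VE.act a, VE.obs (fun u : G => M.obs u.1 (M.run ((a :: ρ).reverse)))] := by
  simp [viewR, h]

lemma viewR_cons_not {G : Set D} {a : A} {ρ : List A} (h : M.dom a ∉ G) :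
    viewR M G (a :: ρ) = absorb (viewR M G ρ)
      (VE.obs (fun u : G => M.obs u.1 (M.run ((a :: ρ).reverse)))) := by
  simp [viewR, h]

lemma reconR_cons_pair_pos {σ : List (TFVal A V)} {b : A} {r : List (TFVal A V)}
    (h : M.dom b = u ∧ σ = r.reverse) :
    reconR M Arch I u (TFVal.pair σ b :: r) = reconR M Arch I u r
      ++ [VE.act b, VE.obs (fun _ => Obs M Arch I u (TFVal.pair σ b :: r).reverse)] := by
  simp [reconR, h]

lemma reconR_cons_pair_neg {σ : List (TFVal A V)} {b : A} {r : List (TFVal A V)}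
    (h : ¬ (M.dom b = u ∧ σ = r.reverse)) :
    reconR M Arch I u (TFVal.pair σ b :: r) = absorb (reconR M Arch I u r)
      (VE.obs (fun _ => Obs M Arch I u (TFVal.pair σ b :: r).reverse)) := by
  simp [reconR, h]

lemma reconR_cons_base {v : V} {r : List (TFVal A V)} :
    reconR M Arch I u (TFVal.base v :: r) = absorb (reconR M Arch I u r)
      (VE.obs (fun _ => Obs M Arch I u (TFVal.base v :: r).reverse)) := by
  simp [reconR]

lemma view_recon (hNC : NonConflating Arch M.dom I) (hFTA : FTACompliant M Arch I) :
    ∀ ρ : List A, viewR M {u} ρ = reconR M Arch I u (tfR Arch M.dom I ρ u).reverse := by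
  intro ρ
  induction ρ with
  | nil =>
    have h0 : Obs M Arch I u ([] : List (TFVal A V)) = M.obs u M.s0 := by
      have := Obs_tf M Arch I u hFTA ([] : List A)
      simpa [tfR, Machine.run] using this
    simp [viewR, reconR, tfR, obsfun, h0, Machine.run]
  | cons a ρ ih =>
    have hobs : (fun u' : ({u} : Set D) => M.obs u'.1 (M.run ((a :: ρ).reverse)))
        = (fun _ : ({u} : Set D) => Obs M Arch I u (tfR Arch M.dom I (a :: ρ) u)) := by
      rw [obsfun, Obs_tf M Arch I u hFTA (a :: ρ)]
    by_cases hu : M.dom a = u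
    · -- action of domain u
      have hmem : M.dom a ∈ ({u} : Set D) := by simpa using hu
      have hedge : Arch.edge (M.dom a) u = some none := by rw [hu]; exact Arch.refl u
      have htf : tfR Arch M.dom I (a :: ρ) u
          = tfR Arch M.dom I ρ u ++ [TFVal.pair (tfR Arch M.dom I ρ u) a] := by
        simp only [tfR, hedge]
        rw [hu]
      have hcond : M.dom a = u ∧ tfR Arch M.dom I ρ u
          = (tfR Arch M.dom I ρ u).reverse.reverse := ⟨hu, by simp⟩
      rw [htf] at hobs
      rw [viewR_cons_mem M hmem, ih, hobs, htf]
      simp only [List.reverse_append, List.reverse_singleton, List.singleton_append]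
      rw [reconR_cons_pair_pos M Arch I u hcond]
      simp
    · -- action of another domain
      have hmem : M.dom a ∉ ({u} : Set D) := by simpa using hu
      have hlast := reconR_getLast? M Arch I u (tfR Arch M.dom I ρ u).reverse
      rw [List.reverse_reverse] at hlast
      rcases hedge : Arch.edge (M.dom a) u with _ | f'
      · -- no edge: tf unchanged
        have htf : tfR Arch M.dom I (a :: ρ) u = tfR Arch M.dom I ρ u := by
          simp only [tfR, hedge]
        rw [htf] at hobs
        rw [viewR_cons_not M hmem, ih, hobs, htf]
        exact absorb_of_getLast? hlast
      · rcases f' with _ | f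
        · -- top edge from another domain
          have htf : tfR Arch M.dom I (a :: ρ) u
              = tfR Arch M.dom I ρ u ++ [TFVal.pair (tfR Arch M.dom I ρ (M.dom a)) a] := by
            simp only [tfR, hedge]
          rw [htf] at hobs
          rw [viewR_cons_not M hmem, ih, hobs, htf]
          have hcond : ¬ (M.dom a = u ∧ tfR Arch M.dom I ρ (M.dom a)
              = (tfR Arch M.dom I ρ u).reverse.reverse) := fun h => hu h.1
          simp only [List.reverse_append, List.reverse_singleton, List.singleton_append]
          rw [reconR_cons_pair_neg M Arch I u hcond]
          simp
        · -- filter edge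
          rcases hx : I f ρ.reverse a with _ | v | ⟨σ, b⟩
          · -- ε transmitted : tf unchanged
            have htf : tfR Arch M.dom I (a :: ρ) u = tfR Arch M.dom I ρ u := by
              simp only [tfR, hedge, hx, snoc']
            rw [htf] at hobs
            rw [viewR_cons_not M hmem, ih, hobs, htf]
            exact absorb_of_getLast? hlast
          · -- basic value transmitted
            have htf : tfR Arch M.dom I (a :: ρ) u
                = tfR Arch M.dom I ρ u ++ [TFVal.base v] := by
              simp only [tfR, hedge, hx, snoc']
            rw [htf] at hobs
            rw [viewR_cons_not M hmem, ih, hobs, htf]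
            simp only [List.reverse_append, List.reverse_singleton, List.singleton_append]
            rw [reconR_cons_base M Arch I u]
            simp
          · -- pair transmitted
            have htf : tfR Arch M.dom I (a :: ρ) u
                = tfR Arch M.dom I ρ u ++ [TFVal.pair σ b] := by
              simp only [tfR, hedge, hx, snoc']
            rw [htf] at hobs
            rw [viewR_cons_not M hmem, ih, hobs, htf]
            have hcond : ¬ (M.dom b = u ∧ σ = (tfR Arch M.dom I ρ u).reverse.reverse) := by
              rintro ⟨hb, hσ⟩
              rw [List.reverse_reverse] at hσ
              apply hNC (M.dom a) u f hedge a b rfl hb ρ.reverse ρ.reverse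
              rw [hx, hσ]
              simp [tf]
            simp only [List.reverse_append, List.reverse_singleton, List.singleton_append]
            rw [reconR_cons_pair_neg M Arch I u hcond]
            simp

end Aux

/-- FTA-compliance with a non-conflating interpreted architecture
implies that equality of `tf` values yields equality of views. -/
theorem statement7 {S A D O L V : Type} (M : Machine S A D O)
    (Arch : ExtArch D L) (I : L → List A → A → TFVal A V)
    (hNC : NonConflating Arch M.dom I) (hFTA : FTACompliant M Arch I) :
    ∀ (u : D) (α α' : List A),
      tf Arch M.dom I α u = tf Arch M.dom I α' u →
        view M {u} α = view M {u} α' := by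
  intro u α α' h
  unfold view
  rw [view_recon M Arch I u hNC hFTA, view_recon M Arch I u hNC hFTA]
  have : tfR Arch M.dom I α.reverse u = tfR Arch M.dom I α'.reverse u := by
    simpa [tf] using h
  rw [this]
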